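/- arXiv:2205.11046 — 4 statements merged into one kernel-verified Lean document; each statement's English description precedes it below -/
import Mathlib

section
/- Let λ ∈ ℂ \ {0} and * ∈ {p, m}. The two eigenvalues of the transfer matrix T_* have equal absolute value if and only if λ + λ⁻¹ is a real number and (λ + λ⁻¹ − 2 p a_* cosh(2γ))² − 4 |b_* q|² ≤ 0 (this quantity being real under the first condition). Consequently, λ ∉ Λ if and only if these two conditions hold for some * ∈ {p, m}. -/
noncomputable section
open Complex Matrix

/-- The transfer matrix `T_*` for parameters `(a_*, b_*) = (aS, bS)`. -/
def Tmat (γ p aS : ℝ) (q bS lam : ℂ) : Matrix (Fin 2) (Fin 2) ℂ :=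
  (1 / (bS * q * lam)) •
    !![lam ^ 2 - 2 * (aS : ℂ) * (p : ℂ) * (Real.cosh (2 * γ) : ℂ) * lam + (aS : ℂ) ^ 2,
        -(starRingEnd ℂ) bS * ((p : ℂ) * lam - (aS : ℂ) * (Real.exp (2 * γ) : ℂ));
      -(bS * ((p : ℂ) * lam - (aS : ℂ) * (Real.exp (-(2 * γ)) : ℂ))),
        (‖bS‖ : ℂ) ^ 2]

/-- `z₁, z₂` are the two eigenvalues (roots of the characteristic polynomial) of `A`,
counted with multiplicity. -/
def IsEigPair (A : Matrix (Fin 2) (Fin 2) ℂ) (z₁ z₂ : ℂ) : Prop :=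
  A.charpoly = (Polynomial.X - Polynomial.C z₁) * (Polynomial.X - Polynomial.C z₂)

/-- The set `Λ` of nonzero `λ` such that for each `* ∈ {p, m}` the two eigenvalues of `T_*`
have distinct absolute values. -/
def LamSet (γ p aP aM : ℝ) (q bP bM : ℂ) : Set ℂ :=
  {lam | lam ≠ 0 ∧
    (∃ z₁ z₂ : ℂ, IsEigPair (Tmat γ p aP q bP lam) z₁ z₂ ∧ ‖z₁‖ ≠ ‖z₂‖) ∧
    (∃ z₁ z₂ : ℂ, IsEigPair (Tmat γ p aM q bM lam) z₁ z₂ ∧ ‖z₁‖ ≠ ‖z₂‖)}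




open Polynomial in
lemma my_charpoly_fin_two (M : Matrix (Fin 2) (Fin 2) ℂ) :
    M.charpoly = X^2 - C M.trace * X + C M.det := by
  rw [Matrix.charpoly, Matrix.det_fin_two]
  simp [Matrix.charmatrix_apply, Matrix.trace_fin_two, Matrix.det_fin_two]
  ring

lemma isEigPair_iff (A : Matrix (Fin 2) (Fin 2) ℂ) (z₁ z₂ : ℂ) :
    IsEigPair A z₁ z₂ ↔ z₁ + z₂ = A.trace ∧ z₁ * z₂ = A.det := by
  rw [IsEigPair, my_charpoly_fin_two]
  constructor
  · intro h
    have h0 := congrArg (Polynomial.eval 0) h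
    have h1 := congrArg (Polynomial.eval 1) h
    simp [Polynomial.eval_mul] at h0 h1
    constructor
    · linear_combination h1 - h0
    · linear_combination -h0
  · rintro ⟨h1, h2⟩
    rw [← h1, ← h2]; simp only [_root_.map_add, _root_.map_mul]; ring

lemma exists_pair (t d : ℂ) : ∃ z₁ z₂ : ℂ, z₁ + z₂ = t ∧ z₁ * z₂ = d := by
  obtain ⟨δ, hδ⟩ := IsAlgClosed.exists_pow_nat_eq (t^2 - 4*d) (n := 2) (by norm_num)
  exact ⟨(t+δ)/2, (t-δ)/2, by ring, by linear_combination -hδ/4⟩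

lemma pair_unique {z₁ z₂ u₁ u₂ : ℂ} (hs : z₁ + z₂ = u₁ + u₂) (hp : z₁ * z₂ = u₁ * u₂) :
    (z₁ = u₁ ∧ z₂ = u₂) ∨ (z₁ = u₂ ∧ z₂ = u₁) := by
  have h : (z₁ - u₁) * (z₁ - u₂) = 0 := by linear_combination z₁ * hs - hp
  rcases mul_eq_zero.mp h with h' | h'
  · left
    have hz : z₁ = u₁ := by linear_combination h'
    exact ⟨hz, by linear_combination hs - hz⟩
  · right
    have hz : z₁ = u₂ := by linear_combination h'
    exact ⟨hz, by linear_combination hs - hz⟩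

lemma trace_Tmat (γ p aS : ℝ) (q bS lam : ℂ)
    (hb : (aS:ℂ)^2 + (‖bS‖:ℂ)^2 = 1)
    (hlam : lam ≠ 0) (hbS : bS ≠ 0) (hq : q ≠ 0) :
    (Tmat γ p aS q bS lam).trace
      = (lam + lam⁻¹ - 2*(p:ℂ)*(aS:ℂ)*(Real.cosh (2*γ):ℂ)) / (bS*q) := by
  rw [Matrix.trace_fin_two]
  simp only [Tmat, Matrix.smul_apply, Matrix.cons_val', Matrix.cons_val_zero,
    Matrix.cons_val_one, Matrix.head_cons, Matrix.head_fin_const, Matrix.empty_val',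
    Matrix.cons_val_fin_one, smul_eq_mul, Matrix.of_apply]
  field_simp
  linear_combination hb

lemma det_Tmat (γ p aS : ℝ) (q bS lam : ℂ)
    (hq1 : (p:ℂ)^2 + (‖q‖:ℂ)^2 = 1)
    (hlam : lam ≠ 0) (hbS : bS ≠ 0) (hq : q ≠ 0) :
    (Tmat γ p aS q bS lam).det = (starRingEnd ℂ) (bS*q) / (bS*q) := by
  have hbb : bS * (starRingEnd ℂ) bS = (‖bS‖:ℂ)^2 := by
    rw [Complex.mul_conj, Complex.normSq_eq_norm_sq]; push_cast; ring
  have hqq : q * (starRingEnd ℂ) q = (‖q‖:ℂ)^2 := by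
    rw [Complex.mul_conj, Complex.normSq_eq_norm_sq]; push_cast; ring
  have hE : (Real.exp (2*γ) : ℂ) * (Real.exp (-(2*γ)) : ℂ) = 1 := by
    rw [← Complex.ofReal_mul, ← Real.exp_add]; norm_num
  have hcosh : (Real.exp (2*γ) : ℂ) + (Real.exp (-(2*γ)) : ℂ)
      = 2 * (Real.cosh (2*γ) : ℂ) := by
    rw [← Complex.ofReal_add, Real.cosh_eq]; push_cast; ring
  have key : (lam ^ 2 - 2 * (aS:ℂ) * (p:ℂ) * (Real.cosh (2*γ):ℂ) * lam + (aS:ℂ) ^ 2)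
        * (‖bS‖:ℂ)^2
      - (-(starRingEnd ℂ) bS * ((p:ℂ) * lam - (aS:ℂ) * (Real.exp (2*γ):ℂ)))
        * (-(bS * ((p:ℂ) * lam - (aS:ℂ) * (Real.exp (-(2*γ)):ℂ))))
      = (‖bS‖:ℂ)^2 * (‖q‖:ℂ)^2 * lam^2 := by
    linear_combination (-(((p:ℂ) * lam - (aS:ℂ) * (Real.exp (2*γ):ℂ))
        * ((p:ℂ) * lam - (aS:ℂ) * (Real.exp (-(2*γ)):ℂ)))) * hbb
      + ((‖bS‖:ℂ)^2) * (-(lam^2)) * hq1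
      + ((‖bS‖:ℂ)^2) * ((aS:ℂ)*(p:ℂ)*lam) * hcosh
      + ((‖bS‖:ℂ)^2) * (-((aS:ℂ)^2)) * hE
  rw [Tmat, Matrix.det_smul, Matrix.det_fin_two_of, key, _root_.map_mul, Fintype.card_fin]
  field_simp
  linear_combination (-((‖bS‖:ℂ)^2)) * hqq
    + (-(q * (starRingEnd ℂ) q)) * hbb

lemma abs_eq_iff_real (w : ℂ) (c : ℝ) (lam z₁ z₂ : ℂ) (hw : w ≠ 0) (hlam : lam ≠ 0)
    (hsum : z₁ + z₂ = (lam + lam⁻¹ - (c:ℂ)) / w)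
    (hprod : z₁ * z₂ = (starRingEnd ℂ) w / w) :
    ‖z₁‖ = ‖z₂‖ ↔
      ∃ r : ℝ, lam + lam⁻¹ = (r:ℂ) ∧ (r - c)^2 - 4 * ‖w‖ ^ 2 ≤ 0 := by
  have hww : w * (starRingEnd ℂ) w = (‖w‖:ℂ)^2 := by
    rw [Complex.mul_conj, Complex.normSq_eq_norm_sq]; push_cast; ring
  have hs : (lam + lam⁻¹ - (c:ℂ)) = w * (z₁ + z₂) := by
    rw [hsum]; field_simp
  have hcw : (starRingEnd ℂ) w = w * (z₁ * z₂) := by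
    rw [hprod]; field_simp
  constructor
  · intro habs
    have hpa : ‖z₁‖ * ‖z₂‖ = 1 := by
      rw [← norm_mul, hprod, norm_div, Complex.norm_conj, div_self (by simpa using hw)]
    have habs1 : ‖z₁‖ = 1 := by
      have h0 := norm_nonneg z₁
      nlinarith [habs]
    have habs2 : ‖z₂‖ = 1 := by rw [← habs]; exact habs1
    have hz1 : z₁ ≠ 0 := by
      intro h; rw [h] at habs1; simp at habs1
    have hz2 : z₂ ≠ 0 := by
      intro h; rw [h] at habs2; simp at habs2
    have hc1 : (starRingEnd ℂ) z₁ = z₁⁻¹ := by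
      have : z₁ * (starRingEnd ℂ) z₁ = 1 := by
        rw [Complex.mul_conj, Complex.normSq_eq_norm_sq, habs1]; norm_num
      exact ((inv_eq_of_mul_eq_one_right this)).symm
    have hc2 : (starRingEnd ℂ) z₂ = z₂⁻¹ := by
      have : z₂ * (starRingEnd ℂ) z₂ = 1 := by
        rw [Complex.mul_conj, Complex.normSq_eq_norm_sq, habs2]; norm_num
      exact ((inv_eq_of_mul_eq_one_right this)).symm
    set s : ℂ := lam + lam⁻¹ - (c:ℂ) with hsdef
    have hconj : (starRingEnd ℂ) s = s := by
      rw [hs, _root_.map_mul, _root_.map_add, hc1, hc2, hcw]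
      field_simp
      ring
    have hre : ((s.re : ℝ) : ℂ) = s := Complex.conj_eq_iff_re.mp hconj
    refine ⟨s.re + c, ?_, ?_⟩
    · push_cast
      rw [hre]
      simp [hsdef]
    · have hb1 : ‖s‖ ≤ 2 * ‖w‖ := by
        rw [hs, norm_mul]
        have h2 : ‖z₁ + z₂‖ ≤ 2 := by
          calc ‖z₁ + z₂‖ ≤ ‖z₁‖ + ‖z₂‖ :=
                norm_add_le _ _
            _ = 2 := by rw [habs1, habs2]; norm_num
        nlinarith [norm_nonneg w]
      have hre2 : ‖s‖ = |s.re| := by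
        conv_lhs => rw [← hre]
        exact (Complex.norm_real _).trans (Real.norm_eq_abs _)
      rw [hre2] at hb1
      nlinarith [abs_nonneg s.re, norm_nonneg w,
        mul_self_le_mul_self (abs_nonneg s.re) hb1, _root_.sq_abs s.re]
  · rintro ⟨r, hr, hle⟩
    have hDnn : (0:ℝ) ≤ 4 * ‖w‖ ^ 2 - (r - c)^2 := by linarith
    set δ : ℝ := Real.sqrt (4 * ‖w‖ ^ 2 - (r - c)^2) with hδdef
    have hδ2 : δ^2 = 4 * ‖w‖ ^ 2 - (r - c)^2 := Real.sq_sqrt hDnn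
    have hδ2C : (δ:ℂ)^2 = 4 * (‖w‖:ℂ)^2 - ((r:ℂ) - (c:ℂ))^2 := by
      exact_mod_cast hδ2
    set u₁ : ℂ := (((r:ℂ) - (c:ℂ)) + (δ:ℂ)*I)/(2*w) with hu1
    set u₂ : ℂ := (((r:ℂ) - (c:ℂ)) - (δ:ℂ)*I)/(2*w) with hu2
    have husum : z₁ + z₂ = u₁ + u₂ := by
      rw [hsum, hr, hu1, hu2]; field_simp; ring
    have h4 : (((r:ℂ)-(c:ℂ)) + (δ:ℂ)*I) * (((r:ℂ)-(c:ℂ)) - (δ:ℂ)*I)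
        = 4*(‖w‖:ℂ)^2 := by
      linear_combination hδ2C + (-(δ:ℂ)^2) * Complex.I_sq
    have h2w : (2*w) * (2*w) ≠ 0 :=
      mul_ne_zero (mul_ne_zero two_ne_zero hw) (mul_ne_zero two_ne_zero hw)
    have huprod : z₁ * z₂ = u₁ * u₂ := by
      rw [hprod, hu1, hu2, div_mul_div_comm, h4, div_eq_div_iff hw h2w]
      linear_combination (4*w) * hww
    have habsu : ‖u₁‖ = ‖u₂‖ := by
      have e2 : (((r:ℂ) - (c:ℂ)) - (δ:ℂ)*I) = (((r - c : ℝ)):ℂ) + ((-δ : ℝ):ℂ)*I := by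
        push_cast; ring
      have e1 : (((r:ℂ) - (c:ℂ)) + (δ:ℂ)*I) = (((r - c : ℝ)):ℂ) + ((δ : ℝ):ℂ)*I := by
        push_cast; ring
      rw [hu1, hu2, norm_div, norm_div, e1, e2, Complex.norm_add_mul_I,
        Complex.norm_add_mul_I]
      norm_num
    rcases pair_unique husum huprod with ⟨h1, h2⟩ | ⟨h1, h2⟩
    · rw [h1, h2, habsu]
    · rw [h1, h2, habsu]

lemma star_lemma (γ p aS : ℝ) (q bS lam : ℂ)
    (hq1 : (p:ℂ)^2 + (‖q‖:ℂ)^2 = 1)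
    (hb : (aS:ℂ)^2 + (‖bS‖:ℂ)^2 = 1)
    (hlam : lam ≠ 0) (hbS : bS ≠ 0) (hq : q ≠ 0) :
    ((∃ z₁ z₂ : ℂ, IsEigPair (Tmat γ p aS q bS lam) z₁ z₂ ∧
        ‖z₁‖ = ‖z₂‖) ↔
      (∃ r : ℝ, lam + lam⁻¹ = (r:ℂ) ∧
        (r - 2*p*aS*Real.cosh (2*γ))^2 - 4*‖bS*q‖^2 ≤ 0)) ∧
    ((∃ z₁ z₂ : ℂ, IsEigPair (Tmat γ p aS q bS lam) z₁ z₂ ∧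
        ‖z₁‖ ≠ ‖z₂‖) ↔
      ¬ (∃ r : ℝ, lam + lam⁻¹ = (r:ℂ) ∧
        (r - 2*p*aS*Real.cosh (2*γ))^2 - 4*‖bS*q‖^2 ≤ 0)) := by
  have hw : bS * q ≠ 0 := mul_ne_zero hbS hq
  have hc : ((2*p*aS*Real.cosh (2*γ) : ℝ) : ℂ)
      = 2*(p:ℂ)*(aS:ℂ)*(Real.cosh (2*γ):ℂ) := by push_cast; ring
  have key : ∀ z₁ z₂ : ℂ, IsEigPair (Tmat γ p aS q bS lam) z₁ z₂ →
      (‖z₁‖ = ‖z₂‖ ↔ ∃ r : ℝ, lam + lam⁻¹ = (r:ℂ) ∧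
        (r - 2*p*aS*Real.cosh (2*γ))^2 - 4*‖bS*q‖^2 ≤ 0) := by
    intro z₁ z₂ hpair
    obtain ⟨h1, h2⟩ := (isEigPair_iff _ z₁ z₂).mp hpair
    rw [trace_Tmat γ p aS q bS lam hb hlam hbS hq] at h1
    rw [det_Tmat γ p aS q bS lam hq1 hlam hbS hq] at h2
    exact abs_eq_iff_real (bS*q) (2*p*aS*Real.cosh (2*γ)) lam z₁ z₂ hw hlam
      (by rw [hc]; exact h1) h2
  have hex : ∃ z₁ z₂ : ℂ, IsEigPair (Tmat γ p aS q bS lam) z₁ z₂ := by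
    obtain ⟨z₁, z₂, h1, h2⟩ :=
      exists_pair (Tmat γ p aS q bS lam).trace (Tmat γ p aS q bS lam).det
    exact ⟨z₁, z₂, (isEigPair_iff _ _ _).mpr ⟨h1, h2⟩⟩
  constructor
  · constructor
    · rintro ⟨z₁, z₂, hpair, habs⟩; exact (key z₁ z₂ hpair).mp habs
    · intro hP
      obtain ⟨z₁, z₂, hpair⟩ := hex
      exact ⟨z₁, z₂, hpair, (key z₁ z₂ hpair).mpr hP⟩
  · constructor
    · rintro ⟨z₁, z₂, hpair, hne⟩ hP
      exact hne ((key z₁ z₂ hpair).mpr hP)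
    · intro hnP
      obtain ⟨z₁, z₂, hpair⟩ := hex
      exact ⟨z₁, z₂, hpair, fun h => hnP ((key z₁ z₂ hpair).mp h)⟩
/-- The eigenvalues of `T_*` have equal absolute value iff `λ + λ⁻¹` is real and
`(λ + λ⁻¹ − 2 p a_* cosh(2γ))² − 4|b_* q|² ≤ 0`; consequently the characterisation of `λ ∉ Λ`. -/
theorem not_mem_Lambda_iff (γ p : ℝ) (hp : p ∈ Set.Ioo (-1 : ℝ) 1) (q : ℂ)
    (hq : p ^ 2 + ‖q‖ ^ 2 = 1)
    (aP aM : ℝ) (haP : aP ∈ Set.Ioo (-1 : ℝ) 1) (haM : aM ∈ Set.Ioo (-1 : ℝ) 1)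
    (bP bM : ℂ) (hbP : aP ^ 2 + ‖bP‖ ^ 2 = 1) (hbM : aM ^ 2 + ‖bM‖ ^ 2 = 1) (lam : ℂ) (hlam : lam ≠ 0) :
    (∀ aS : ℝ, ∀ bS : ℂ, ((aS, bS) = (aP, bP) ∨ (aS, bS) = (aM, bM)) →
      ((∃ z₁ z₂ : ℂ, IsEigPair (Tmat γ p aS q bS lam) z₁ z₂ ∧
          ‖z₁‖ = ‖z₂‖) ↔
        ∃ r : ℝ, lam + lam⁻¹ = (r : ℂ) ∧
          (r - 2 * p * aS * Real.cosh (2 * γ)) ^ 2 - 4 * ‖bS * q‖ ^ 2 ≤ 0)) ∧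
    (lam ∉ LamSet γ p aP aM q bP bM ↔
      ∃ aS : ℝ, ∃ bS : ℂ, ((aS, bS) = (aP, bP) ∨ (aS, bS) = (aM, bM)) ∧
        ∃ r : ℝ, lam + lam⁻¹ = (r : ℂ) ∧
          (r - 2 * p * aS * Real.cosh (2 * γ)) ^ 2 - 4 * ‖bS * q‖ ^ 2 ≤ 0) := by
  have hqne : q ≠ 0 := by
    intro h
    rw [h] at hq; simp at hq
    rcases hq with h1 | h1 <;> simp [h1, Set.mem_Ioo] at hp
  have hbPne : bP ≠ 0 := by
    intro h
    rw [h] at hbP; simp at hbP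
    rcases hbP with h1 | h1 <;> simp [h1, Set.mem_Ioo] at haP
  have hbMne : bM ≠ 0 := by
    intro h
    rw [h] at hbM; simp at hbM
    rcases hbM with h1 | h1 <;> simp [h1, Set.mem_Ioo] at haM
  have hq1 : (p:ℂ)^2 + (‖q‖:ℂ)^2 = 1 := by exact_mod_cast hq
  have hbPC : (aP:ℂ)^2 + (‖bP‖:ℂ)^2 = 1 := by exact_mod_cast hbP
  have hbMC : (aM:ℂ)^2 + (‖bM‖:ℂ)^2 = 1 := by exact_mod_cast hbM
  have hP := star_lemma γ p aP q bP lam hq1 hbPC hlam hbPne hqne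
  have hM := star_lemma γ p aM q bM lam hq1 hbMC hlam hbMne hqne
  constructor
  · intro aS bS hmem
    rcases hmem with h | h <;> rw [Prod.mk.injEq] at h <;>
      obtain ⟨h1, h2⟩ := h <;> subst h1 <;> subst h2
    · exact hP.1
    · exact hM.1
  · have hmemiff : lam ∈ LamSet γ p aP aM q bP bM ↔
        ((∃ z₁ z₂ : ℂ, IsEigPair (Tmat γ p aP q bP lam) z₁ z₂ ∧
            ‖z₁‖ ≠ ‖z₂‖) ∧
          (∃ z₁ z₂ : ℂ, IsEigPair (Tmat γ p aM q bM lam) z₁ z₂ ∧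
            ‖z₁‖ ≠ ‖z₂‖)) := by
      constructor
      · rintro ⟨_, hA, hB⟩; exact ⟨hA, hB⟩
      · rintro ⟨hA, hB⟩; exact ⟨hlam, hA, hB⟩
    rw [hmemiff, not_and_or, hP.2, hM.2, not_not, not_not]
    constructor
    · rintro (h | h)
      · exact ⟨aP, bP, Or.inl rfl, h⟩
      · exact ⟨aM, bM, Or.inr rfl, h⟩
    · rintro ⟨aS, bS, (h | h), hr⟩ <;> rw [Prod.mk.injEq] at h <;>
        obtain ⟨h1, h2⟩ := h <;> subst h1 <;> subst h2
      · exact Or.inl hr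
      · exact Or.inr hr
end
end

section
/- Let d > 0 be a real number and let X, w ∈ ℂ satisfy w² = X² − 4d². Then |X + w|² = 4d² and |X − w|² = 4d² hold simultaneously if and only if X is real and X² − 4d² ≤ 0. -/
noncomputable section
open Complex Matrix

/-- For `d > 0` and `w² = X² − 4d²`: `|X + w|² = 4d²` and `|X − w|² = 4d²` hold simultaneously
iff `X` is real and `X² − 4d² ≤ 0`. -/
theorem abs_eq_iff_real_and_nonpos (d : ℝ) (hd : 0 < d) (X w : ℂ)
    (hw : w ^ 2 = X ^ 2 - 4 * (d : ℂ) ^ 2) :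
    (‖X + w‖ ^ 2 = 4 * d ^ 2 ∧ ‖X - w‖ ^ 2 = 4 * d ^ 2) ↔
      ∃ r : ℝ, X = (r : ℂ) ∧ r ^ 2 - 4 * d ^ 2 ≤ 0 := by
  have hre := congrArg Complex.re hw
  have him := congrArg Complex.im hw
  simp only [pow_two, Complex.mul_re, Complex.mul_im, Complex.sub_re, Complex.sub_im,
    Complex.ofReal_re, Complex.ofReal_im] at hre him
  norm_num at hre him
  constructor
  · rintro ⟨h1, h2⟩
    rw [Complex.sq_norm, Complex.normSq_apply] at h1 h2
    simp only [Complex.add_re, Complex.add_im, Complex.sub_re, Complex.sub_im] at h1 h2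
    have hb : X.im = 0 := by nlinarith [sq_nonneg X.im, sq_nonneg w.re]
    have hc : w.re = 0 := by nlinarith [sq_nonneg X.im, sq_nonneg w.re]
    refine ⟨X.re, ?_, ?_⟩
    · exact Complex.ext rfl (by simpa using hb)
    · nlinarith [sq_nonneg w.im]
  · rintro ⟨r, rfl, hr⟩
    rw [Complex.sq_norm, Complex.normSq_apply, Complex.sq_norm, Complex.normSq_apply]
    simp only [Complex.add_re, Complex.add_im, Complex.sub_re, Complex.sub_im,
      Complex.ofReal_re, Complex.ofReal_im] at *
    have hce : w.re * w.im = 0 := by linarith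
    have hc4 : w.re ^ 4 ≤ 0 := by
      nlinarith [sq_nonneg w.re, hce, mul_nonpos_of_nonneg_of_nonpos (sq_nonneg w.re) hr]
    have hc : w.re = 0 := by
      have h0 : w.re ^ 4 = 0 := le_antisymm hc4 (by positivity)
      exact pow_eq_zero_iff (by norm_num : (4:ℕ) ≠ 0) |>.mp h0
    rw [hc] at hre
    constructor <;> (rw [hc]; nlinarith)
end
end

section
/- Let (s₁, s₂) ∈ {−1, +1}² and set λ = λ(s₁, s₂). Then for each * ∈ {p, m}, (λ + λ⁻¹ − 2 p a_* cosh(2γ))² − 4 |b_* q|² = 4 (p cosh(2γ) − s₂ a_* √(1 + p² sinh²(2γ)))². Consequently, if p cosh(2γ)/|q| ≠ s₂ a_*/|b_*| for each * ∈ {p, m}, then λ(s₁, s₂) ∈ Λ. -/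
noncomputable section
open Complex Matrix

/-- `λ(s₁, s₂) = s₁ p sinh(2γ) + s₂ √(1 + p² sinh²(2γ))`. -/
def lamSS (γ p s₁ s₂ : ℝ) : ℝ :=
  s₁ * p * Real.sinh (2 * γ) + s₂ * Real.sqrt (1 + p ^ 2 * Real.sinh (2 * γ) ^ 2)

open Polynomial in
lemma charpoly_fin_two' (M : Matrix (Fin 2) (Fin 2) ℂ) :
    M.charpoly = X ^ 2 - C M.trace * X + C M.det := by
  rw [Matrix.charpoly, Matrix.det_fin_two, Matrix.charmatrix_apply_eq,
    Matrix.charmatrix_apply_eq, Matrix.charmatrix_apply_ne _ _ _ (by decide),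
    Matrix.charmatrix_apply_ne _ _ _ (by decide), Matrix.trace_fin_two, Matrix.det_fin_two]
  simp only [map_add, _root_.map_mul, map_sub, map_neg]
  ring

lemma Tmat_trace (γ p aS : ℝ) (q bS lam : ℂ) :
    (Tmat γ p aS q bS lam).trace = (1 / (bS * q * lam)) *
      (lam ^ 2 - 2 * (aS : ℂ) * (p : ℂ) * (Real.cosh (2 * γ) : ℂ) * lam + (aS : ℂ) ^ 2
        + (‖bS‖ : ℂ) ^ 2) := by
  simp [Tmat, Matrix.trace_fin_two, Matrix.smul_apply]
  ring

lemma Tmat_det (γ p aS : ℝ) (q bS lam : ℂ) :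
    (Tmat γ p aS q bS lam).det = (1 / (bS * q * lam)) ^ 2 *
      ((lam ^ 2 - 2 * (aS : ℂ) * (p : ℂ) * (Real.cosh (2 * γ) : ℂ) * lam + (aS : ℂ) ^ 2)
          * (‖bS‖ : ℂ) ^ 2
        - ((starRingEnd ℂ) bS * ((p : ℂ) * lam - (aS : ℂ) * (Real.exp (2 * γ) : ℂ)))
          * (bS * ((p : ℂ) * lam - (aS : ℂ) * (Real.exp (-(2 * γ)) : ℂ)))) := by
  simp [Tmat, Matrix.det_fin_two, Matrix.smul_apply]
  ring

lemma eig_exists (γ p aS : ℝ) (q bS : ℂ) (hq0 : q ≠ 0) (hb0 : bS ≠ 0)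
    (habsB : ‖bS‖ ^ 2 = 1 - aS ^ 2) (habsQ : ‖q‖ ^ 2 = 1 - p ^ 2)
    (lamR : ℝ) (hlam : lamR ≠ 0)
    (hD : 0 < (lamR + lamR⁻¹ - 2 * p * aS * Real.cosh (2 * γ)) ^ 2
      - 4 * ‖bS * q‖ ^ 2) :
    ∃ z₁ z₂ : ℂ, IsEigPair (Tmat γ p aS q bS (lamR : ℂ)) z₁ z₂ ∧
      ‖z₁‖ ≠ ‖z₂‖ := by
  set t : ℝ := lamR + lamR⁻¹ - 2 * p * aS * Real.cosh (2 * γ) with ht_def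
  set m : ℝ := ‖bS * q‖ with hm_def
  set u : ℂ := bS * q with hu_def
  have hu0 : u ≠ 0 := mul_ne_zero hb0 hq0
  have hm : 0 < m := norm_pos_iff.mpr hu0
  set s : ℝ := Real.sqrt (t ^ 2 - 4 * m ^ 2) with hs_def
  have hs : 0 < s := Real.sqrt_pos.mpr hD
  have hs2 : s ^ 2 = t ^ 2 - 4 * m ^ 2 := Real.sq_sqrt hD.le
  have ht0 : t ≠ 0 := by intro h0; rw [h0] at hs2; nlinarith
  set w₁ : ℝ := (t + s) / 2 with hw1_def
  set w₂ : ℝ := (t - s) / 2 with hw2_def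
  have hwprod : w₁ * w₂ = m ^ 2 := by
    rw [hw1_def, hw2_def]; linear_combination (-1/4 : ℝ) * hs2
  have hlamC : (lamR : ℂ) ≠ 0 := Complex.ofReal_ne_zero.mpr hlam
  have hcB : ((‖bS‖ : ℝ) : ℂ) ^ 2 = 1 - (aS : ℂ) ^ 2 := by
    exact_mod_cast congrArg (fun x : ℝ => (x : ℂ)) habsB
  have hbc : bS * (starRingEnd ℂ) bS = ((‖bS‖ : ℝ) : ℂ) ^ 2 := by
    rw [Complex.mul_conj]; norm_cast; exact (Complex.sq_norm bS).symm
  have hE : ((Real.exp (2 * γ) : ℝ) : ℂ) * ((Real.exp (-(2 * γ)) : ℝ) : ℂ) = 1 := by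
    norm_cast; rw [← Real.exp_add]; simp
  have hCosh : ((Real.cosh (2 * γ) : ℝ) : ℂ) =
      (((Real.exp (2 * γ) : ℝ) : ℂ) + ((Real.exp (-(2 * γ)) : ℝ) : ℂ)) / 2 := by
    norm_cast; exact Real.cosh_eq _
  have htC : ((t : ℝ) : ℂ) = (lamR : ℂ) + (lamR : ℂ)⁻¹
      - 2 * (p : ℂ) * (aS : ℂ) * ((Real.cosh (2 * γ) : ℝ) : ℂ) := by
    rw [ht_def]; push_cast; ring
  have hmC : ((m : ℝ) : ℂ) ^ 2 = (1 - (aS : ℂ) ^ 2) * (1 - (p : ℂ) ^ 2) := by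
    have h9 : m ^ 2 = (1 - aS ^ 2) * (1 - p ^ 2) := by
      rw [hm_def, hu_def, norm_mul, mul_pow, habsB, habsQ]
    exact_mod_cast congrArg (fun x : ℝ => (x : ℂ)) h9
  refine ⟨(w₁ : ℂ) / u, (w₂ : ℂ) / u, ?_, ?_⟩
  · have htr : (Tmat γ p aS q bS (lamR : ℂ)).trace = (w₁ : ℂ) / u + (w₂ : ℂ) / u := by
      rw [Tmat_trace]
      have hsum : (w₁ : ℂ) + (w₂ : ℂ) = (t : ℂ) := by
        rw [hw1_def, hw2_def]; push_cast; ring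
      rw [← add_div, hsum, htC]
      field_simp
      linear_combination (bS * q) * hcB
    have hdet : (Tmat γ p aS q bS (lamR : ℂ)).det = ((w₁ : ℂ) / u) * ((w₂ : ℂ) / u) := by
      rw [Tmat_det]
      have hprodC : (w₁ : ℂ) * (w₂ : ℂ) = ((m : ℝ) : ℂ) ^ 2 := by
        exact_mod_cast congrArg (fun x : ℝ => (x : ℂ)) hwprod
      rw [div_mul_div_comm, hprodC, hmC]
      have key : ((lamR : ℂ) ^ 2 - 2 * (aS : ℂ) * (p : ℂ) * ((Real.cosh (2 * γ) : ℝ) : ℂ)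
            * (lamR : ℂ) + (aS : ℂ) ^ 2) * ((‖bS‖ : ℝ) : ℂ) ^ 2
          - ((starRingEnd ℂ) bS * ((p : ℂ) * (lamR : ℂ) - (aS : ℂ) * ((Real.exp (2 * γ) : ℝ) : ℂ)))
            * (bS * ((p : ℂ) * (lamR : ℂ) - (aS : ℂ) * ((Real.exp (-(2 * γ)) : ℝ) : ℂ)))
          = (1 - (aS : ℂ) ^ 2) * (1 - (p : ℂ) ^ 2) * (lamR : ℂ) ^ 2 := by
        linear_combination
          (-(((p : ℂ) * (lamR : ℂ) - (aS : ℂ) * ((Real.exp (2 * γ) : ℝ) : ℂ))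
            * ((p : ℂ) * (lamR : ℂ) - (aS : ℂ) * ((Real.exp (-(2 * γ)) : ℝ) : ℂ)))) * hbc
          + (((lamR : ℂ) ^ 2 - 2 * (aS : ℂ) * (p : ℂ) * ((Real.cosh (2 * γ) : ℝ) : ℂ)
              * (lamR : ℂ) + (aS : ℂ) ^ 2)
            - ((p : ℂ) * (lamR : ℂ) - (aS : ℂ) * ((Real.exp (2 * γ) : ℝ) : ℂ))
              * ((p : ℂ) * (lamR : ℂ) - (aS : ℂ) * ((Real.exp (-(2 * γ)) : ℝ) : ℂ))) * hcB
          + (-2 * (aS : ℂ) * (p : ℂ) * (lamR : ℂ) * (1 - (aS : ℂ) ^ 2)) * hCosh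
          + (-(aS : ℂ) ^ 2 * (1 - (aS : ℂ) ^ 2)) * hE
      rw [key]
      rw [hu_def]
      field_simp
    rw [IsEigPair, charpoly_fin_two', htr, hdet]
    simp only [map_add, _root_.map_mul]
    ring
  · have habs : ∀ w : ℝ, ‖(w : ℂ) / u‖ = |w| / m := by
      intro w; rw [norm_div, Complex.norm_real, Real.norm_eq_abs, hm_def]
    rw [habs, habs]
    intro h
    have h2 : |w₁| = |w₂| := by field_simp at h; exact h
    have h3 : w₁ ^ 2 = w₂ ^ 2 := by
      rw [← _root_.sq_abs w₁, ← _root_.sq_abs w₂, h2]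
    have hts : t * s = 0 := by
      rw [hw1_def, hw2_def] at h3; linear_combination h3
    exact (mul_ne_zero ht0 hs.ne') hts

lemma lamSS_mul (γ p s₁ s₂ : ℝ) (hs₁ : s₁ ^ 2 = 1) (hs₂ : s₂ ^ 2 = 1) :
    lamSS γ p s₁ s₂ *
      (s₂ * Real.sqrt (1 + p ^ 2 * Real.sinh (2 * γ) ^ 2) - s₁ * p * Real.sinh (2 * γ)) = 1 := by
  have hR2 : Real.sqrt (1 + p ^ 2 * Real.sinh (2 * γ) ^ 2) ^ 2
      = 1 + p ^ 2 * Real.sinh (2 * γ) ^ 2 := Real.sq_sqrt (by positivity)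
  simp only [lamSS]
  set S := Real.sinh (2 * γ)
  set R := Real.sqrt (1 + p ^ 2 * S ^ 2)
  first
  | linear_combination R ^ 2 * hs₂ - p ^ 2 * S ^ 2 * hs₁ + hs₂ * hR2
  | linear_combination R ^ 2 * hs₂ - p ^ 2 * S ^ 2 * hs₁ + hR2

lemma lamSS_inv (γ p s₁ s₂ : ℝ) (hs₁ : s₁ ^ 2 = 1) (hs₂ : s₂ ^ 2 = 1) :
    (lamSS γ p s₁ s₂)⁻¹ =
      s₂ * Real.sqrt (1 + p ^ 2 * Real.sinh (2 * γ) ^ 2) - s₁ * p * Real.sinh (2 * γ) :=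
  inv_eq_of_mul_eq_one_right (lamSS_mul γ p s₁ s₂ hs₁ hs₂)

lemma lamSS_ne_zero (γ p s₁ s₂ : ℝ) (hs₁ : s₁ ^ 2 = 1) (hs₂ : s₂ ^ 2 = 1) :
    lamSS γ p s₁ s₂ ≠ 0 :=
  left_ne_zero_of_mul_eq_one (lamSS_mul γ p s₁ s₂ hs₁ hs₂)

lemma disc_eq (γ p aS s₁ s₂ B Q : ℝ) (hs₁ : s₁ ^ 2 = 1) (hs₂ : s₂ ^ 2 = 1)
    (hB : B ^ 2 = 1 - aS ^ 2) (hQ : Q ^ 2 = 1 - p ^ 2) :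
    (lamSS γ p s₁ s₂ + (lamSS γ p s₁ s₂)⁻¹ - 2 * p * aS * Real.cosh (2 * γ)) ^ 2
        - 4 * (B * Q) ^ 2
      = 4 * (p * Real.cosh (2 * γ)
        - s₂ * aS * Real.sqrt (1 + p ^ 2 * Real.sinh (2 * γ) ^ 2)) ^ 2 := by
  rw [lamSS_inv γ p s₁ s₂ hs₁ hs₂]
  have hR2 : Real.sqrt (1 + p ^ 2 * Real.sinh (2 * γ) ^ 2) ^ 2
      = 1 + p ^ 2 * Real.sinh (2 * γ) ^ 2 := Real.sq_sqrt (by positivity)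
  have hC : Real.cosh (2 * γ) ^ 2 = Real.sinh (2 * γ) ^ 2 + 1 := Real.cosh_sq _
  simp only [lamSS]
  set S := Real.sinh (2 * γ)
  set R := Real.sqrt (1 + p ^ 2 * S ^ 2)
  set c := Real.cosh (2 * γ)
  first
  | linear_combination (4 * R ^ 2 * (1 - aS ^ 2)) * hs₂ + (-4 * Q ^ 2) * hB
      + (-4 * (1 - aS ^ 2)) * hQ + (4 * (1 - aS ^ 2)) * hR2 + (-4 * p ^ 2 * (1 - aS ^ 2)) * hC
  | nlinarith [hs₁, hs₂, hB, hQ, hR2, hC]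

lemma crit_ne (γ p aS s₂ Q B : ℝ) (hs₂ : s₂ ^ 2 = 1) (hQpos : 0 < Q) (hBpos : 0 < B)
    (hQ : Q ^ 2 = 1 - p ^ 2) (hB : B ^ 2 = 1 - aS ^ 2)
    (h : p * Real.cosh (2 * γ) / Q ≠ s₂ * aS / B) :
    p * Real.cosh (2 * γ) ≠ s₂ * aS * Real.sqrt (1 + p ^ 2 * Real.sinh (2 * γ) ^ 2) := by
  intro heq
  apply h
  have hR2 : Real.sqrt (1 + p ^ 2 * Real.sinh (2 * γ) ^ 2) ^ 2
      = 1 + p ^ 2 * Real.sinh (2 * γ) ^ 2 := Real.sq_sqrt (by positivity)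
  have hC : Real.cosh (2 * γ) ^ 2 = Real.sinh (2 * γ) ^ 2 + 1 := Real.cosh_sq _
  set S := Real.sinh (2 * γ) with hS_def
  set R := Real.sqrt (1 + p ^ 2 * S ^ 2) with hR_def
  have hsq : (p * Real.cosh (2 * γ)) ^ 2 = aS ^ 2 * (1 + p ^ 2 * S ^ 2) := by
    rw [heq]
    linear_combination (aS ^ 2 * (1 + p ^ 2 * S ^ 2)) * hs₂ + (aS ^ 2 * s₂ ^ 2) * hR2
  have h2 : (R * B) ^ 2 = Q ^ 2 := by
    first
    | linear_combination B ^ 2 * hR2 + (1 + p ^ 2 * S ^ 2) * hB - hQ + hsq - p ^ 2 * hC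
    | linear_combination B ^ 2 * hR2 + (1 + p ^ 2 * S ^ 2) * hB - hQ - hsq + p ^ 2 * hC
  have hRpos : 0 < R := Real.sqrt_pos.mpr (by positivity)
  have hRB : R * B = Q := (pow_left_inj₀ (by positivity) hQpos.le two_ne_zero).mp h2
  rw [div_eq_div_iff hQpos.ne' hBpos.ne', heq, ← hRB]
  ring

/-- The discriminant at `λ(s₁, s₂)` and membership `λ(s₁, s₂) ∈ Λ`. -/
theorem lamSS_mem_Lambda (γ p : ℝ) (hp : p ∈ Set.Ioo (-1 : ℝ) 1) (q : ℂ)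
    (hq : p ^ 2 + ‖q‖ ^ 2 = 1)
    (aP aM : ℝ) (haP : aP ∈ Set.Ioo (-1 : ℝ) 1) (haM : aM ∈ Set.Ioo (-1 : ℝ) 1)
    (bP bM : ℂ) (hbP : aP ^ 2 + ‖bP‖ ^ 2 = 1) (hbM : aM ^ 2 + ‖bM‖ ^ 2 = 1) (s₁ s₂ : ℝ)
    (hs₁ : s₁ = 1 ∨ s₁ = -1) (hs₂ : s₂ = 1 ∨ s₂ = -1) :
    (∀ aS : ℝ, ∀ bS : ℂ, ((aS, bS) = (aP, bP) ∨ (aS, bS) = (aM, bM)) →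
      (lamSS γ p s₁ s₂ + (lamSS γ p s₁ s₂)⁻¹ - 2 * p * aS * Real.cosh (2 * γ)) ^ 2 -
          4 * ‖bS * q‖ ^ 2 =
        4 * (p * Real.cosh (2 * γ) -
          s₂ * aS * Real.sqrt (1 + p ^ 2 * Real.sinh (2 * γ) ^ 2)) ^ 2) ∧
    ((∀ aS : ℝ, ∀ bS : ℂ, ((aS, bS) = (aP, bP) ∨ (aS, bS) = (aM, bM)) →
        p * Real.cosh (2 * γ) / ‖q‖ ≠ s₂ * aS / ‖bS‖) →
      ((lamSS γ p s₁ s₂ : ℝ) : ℂ) ∈ LamSet γ p aP aM q bP bM) := by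
  have hs₁' : s₁ ^ 2 = 1 := by rcases hs₁ with h | h <;> rw [h] <;> norm_num
  have hs₂' : s₂ ^ 2 = 1 := by rcases hs₂ with h | h <;> rw [h] <;> norm_num
  have hq2 : ‖q‖ ^ 2 = 1 - p ^ 2 := by linarith
  have hbP2 : ‖bP‖ ^ 2 = 1 - aP ^ 2 := by linarith
  have hbM2 : ‖bM‖ ^ 2 = 1 - aM ^ 2 := by linarith
  have hQpos : 0 < ‖q‖ := by
    have h0 : ‖q‖ ≠ 0 := by
      intro h; rw [h] at hq2; nlinarith [hp.1, hp.2]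
    exact lt_of_le_of_ne (norm_nonneg q) (Ne.symm h0)
  have hBPpos : 0 < ‖bP‖ := by
    have h0 : ‖bP‖ ≠ 0 := by
      intro h; rw [h] at hbP2; nlinarith [haP.1, haP.2]
    exact lt_of_le_of_ne (norm_nonneg bP) (Ne.symm h0)
  have hBMpos : 0 < ‖bM‖ := by
    have h0 : ‖bM‖ ≠ 0 := by
      intro h; rw [h] at hbM2; nlinarith [haM.1, haM.2]
    exact lt_of_le_of_ne (norm_nonneg bM) (Ne.symm h0)
  have hq0 : q ≠ 0 := norm_pos_iff.mp hQpos
  have hbP0 : bP ≠ 0 := norm_pos_iff.mp hBPpos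
  have hbM0 : bM ≠ 0 := norm_pos_iff.mp hBMpos
  constructor
  · intro aS bS h
    rcases h with h | h <;>
      (rw [Prod.mk.injEq] at h; obtain ⟨h1, h2⟩ := h; rw [h1, h2])
    · rw [norm_mul]
      exact disc_eq γ p aP s₁ s₂ _ _ hs₁' hs₂' hbP2 hq2
    · rw [norm_mul]
      exact disc_eq γ p aM s₁ s₂ _ _ hs₁' hs₂' hbM2 hq2
  · intro hne
    have h1 := hne aP bP (Or.inl rfl)
    have h2 := hne aM bM (Or.inr rfl)
    have hl0 : lamSS γ p s₁ s₂ ≠ 0 := lamSS_ne_zero _ _ _ _ hs₁' hs₂'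
    refine ⟨Complex.ofReal_ne_zero.mpr hl0, ?_, ?_⟩
    · apply eig_exists γ p aP q bP hq0 hbP0 hbP2 hq2 _ hl0
      rw [norm_mul,
        disc_eq γ p aP s₁ s₂ (‖bP‖) (‖q‖) hs₁' hs₂' hbP2 hq2]
      have hcrit := crit_ne γ p aP s₂ (‖q‖) (‖bP‖) hs₂' hQpos hBPpos
        hq2 hbP2 h1
      have hx := sub_ne_zero.mpr hcrit
      positivity
    · apply eig_exists γ p aM q bM hq0 hbM0 hbM2 hq2 _ hl0
      rw [norm_mul,
        disc_eq γ p aM s₁ s₂ (‖bM‖) (‖q‖) hs₁' hs₂' hbM2 hq2]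
      have hcrit := crit_ne γ p aM s₂ (‖q‖) (‖bM‖) hs₂' hQpos hBMpos
        hq2 hbM2 h2
      have hx := sub_ne_zero.mpr hcrit
      positivity
end
end

section
/- Let s₂ ∈ {−1, +1} and * ∈ {p, m}, and set s_*' = sgn(p cosh(2γ) − s₂ a_* √(1 + p² sinh²(2γ))). Then s_*' = +1 if and only if p cosh(2γ)/|q| > s₂ a_*/|b_*|, and s_*' = −1 if and only if p cosh(2γ)/|q| < s₂ a_*/|b_*|. -/
lemma key_ineq (t Q A S B : ℝ) (hQ : 0 < Q) (hB : 0 < B) (hS : 0 < S)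
    (hSsq : S ^ 2 = t ^ 2 + Q ^ 2) (hAB : A ^ 2 + B ^ 2 = 1) :
    A * S < t ↔ A * Q < t * B := by
  constructor
  · intro h
    rcases le_or_gt A 0 with hA | hA
    · rcases le_or_gt 0 t with ht | ht
      · rcases eq_or_lt_of_le hA with hA0 | hA0
        · rcases eq_or_lt_of_le ht with ht0 | ht0
          · exfalso; nlinarith
          · nlinarith [mul_pos ht0 hB, mul_nonpos_of_nonpos_of_nonneg hA hQ.le]
        · nlinarith [mul_pos (neg_pos.2 hA0) hQ, mul_nonneg ht hB.le]
      · -- t < 0, so A < 0 needed; show (-A)Q > (-t)B via squares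
        have hA0 : A < 0 := by nlinarith
        nlinarith [mul_pos (neg_pos.2 ht) hB, mul_pos (neg_pos.2 hA0) hQ,
          mul_pos (neg_pos.2 ht) (neg_pos.2 hA0), sq_nonneg (A*Q + t*B),
          mul_pos hS (neg_pos.2 hA0)]
    · have ht : 0 < t := lt_trans (by positivity) h
      nlinarith [mul_pos ht hB, mul_pos hA hQ, mul_pos hA hS, sq_nonneg (A*Q - t*B)]
  · intro h
    rcases le_or_gt A 0 with hA | hA
    · rcases le_or_gt 0 t with ht | ht
      · rcases eq_or_lt_of_le ht with ht0 | ht0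
        · have hA0 : A < 0 := by nlinarith
          nlinarith [mul_pos (neg_pos.2 hA0) hS]
        · nlinarith [mul_nonpos_of_nonpos_of_nonneg hA hS.le]
      · have hA0 : A < 0 := by nlinarith
        nlinarith [mul_pos (neg_pos.2 ht) (neg_pos.2 hA0), mul_pos (neg_pos.2 hA0) hS,
          mul_pos (neg_pos.2 ht) hB, sq_nonneg (A*S - t), sq_nonneg (A*S + t)]
    · have ht : 0 < t := by nlinarith [mul_pos hA hQ]
      have h2 : 0 < (t*B - A*Q) * (t*B + A*Q) :=
        mul_pos (sub_pos.2 h) (by positivity)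
      nlinarith [mul_pos hA hS, h2, mul_pos ht hB, mul_pos (mul_pos hA hQ) (mul_pos ht hB)]

lemma real_sign_eq_one_iff {x : ℝ} : Real.sign x = 1 ↔ 0 < x := by
  constructor
  · intro h
    rcases lt_trichotomy x 0 with h1 | h1 | h1
    · rw [Real.sign_of_neg h1] at h; norm_num at h
    · rw [h1, Real.sign_zero] at h; norm_num at h
    · exact h1
  · exact Real.sign_of_pos

lemma real_sign_eq_neg_one_iff {x : ℝ} : Real.sign x = -1 ↔ x < 0 := by
  constructor
  · intro h
    rcases lt_trichotomy x 0 with h1 | h1 | h1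
    · exact h1
    · rw [h1, Real.sign_zero] at h; norm_num at h
    · rw [Real.sign_of_pos h1] at h; norm_num at h
  · exact Real.sign_of_neg

noncomputable section
open Complex Matrix

/-- Characterisation of the sign `s_*'`. -/
theorem sign_sStarPrime (γ p : ℝ) (hp : p ∈ Set.Ioo (-1 : ℝ) 1) (q : ℂ)
    (hq : p ^ 2 + ‖q‖ ^ 2 = 1)
    (aP aM : ℝ) (haP : aP ∈ Set.Ioo (-1 : ℝ) 1) (haM : aM ∈ Set.Ioo (-1 : ℝ) 1)
    (bP bM : ℂ) (hbP : aP ^ 2 + ‖bP‖ ^ 2 = 1) (hbM : aM ^ 2 + ‖bM‖ ^ 2 = 1) (s₂ : ℝ) (hs₂ : s₂ = 1 ∨ s₂ = -1) :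
    ∀ aS : ℝ, ∀ bS : ℂ, ((aS, bS) = (aP, bP) ∨ (aS, bS) = (aM, bM)) →
      (Real.sign (p * Real.cosh (2 * γ) -
            s₂ * aS * Real.sqrt (1 + p ^ 2 * Real.sinh (2 * γ) ^ 2)) = 1 ↔
        p * Real.cosh (2 * γ) / ‖q‖ > s₂ * aS / ‖bS‖) ∧
      (Real.sign (p * Real.cosh (2 * γ) -
            s₂ * aS * Real.sqrt (1 + p ^ 2 * Real.sinh (2 * γ) ^ 2)) = -1 ↔
        p * Real.cosh (2 * γ) / ‖q‖ < s₂ * aS / ‖bS‖) := by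
  rintro aS bS (h | h) <;> rw [Prod.mk.injEq] at h <;> obtain ⟨ha, hb⟩ := h <;> subst ha <;> subst hb
  all_goals {
    first
    | (have haS : aS ∈ Set.Ioo (-1:ℝ) 1 := haP
       have hbS : aS ^ 2 + ‖bS‖ ^ 2 = 1 := hbP)
    | (have haS : aS ∈ Set.Ioo (-1:ℝ) 1 := haM
       have hbS : aS ^ 2 + ‖bS‖ ^ 2 = 1 := hbM)
    have hq0 : (0:ℝ) < ‖q‖ := by
      have : ‖q‖ ^ 2 = 1 - p ^ 2 := by linarith
      nlinarith [hp.1, hp.2, norm_nonneg q]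
    have hb0 : (0:ℝ) < ‖bS‖ := by
      nlinarith [haS.1, haS.2, norm_nonneg bS]
    set t := p * Real.cosh (2 * γ) with ht
    set S := Real.sqrt (1 + p ^ 2 * Real.sinh (2 * γ) ^ 2) with hSdef
    have hS0 : 0 < S := Real.sqrt_pos.2 (by positivity)
    have hSsq : S ^ 2 = t ^ 2 + ‖q‖ ^ 2 := by
      rw [hSdef, Real.sq_sqrt (by positivity)]
      have hc := Real.cosh_sq (2 * γ)
      rw [ht]; linear_combination (-(p^2)) * hc - hq
    have hs2 : s₂ ^ 2 = 1 := by rcases hs₂ with h | h <;> rw [h] <;> norm_num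
    have hAB : (s₂ * aS) ^ 2 + ‖bS‖ ^ 2 = 1 := by
      have : (s₂ * aS) ^ 2 = aS ^ 2 := by rw [mul_pow, hs2, one_mul]
      rw [this]; exact hbS
    constructor
    · rw [real_sign_eq_one_iff, gt_iff_lt, div_lt_div_iff₀ hb0 hq0, sub_pos]
      exact key_ineq t (‖q‖) (s₂ * aS) S (‖bS‖) hq0 hb0 hS0 hSsq hAB
    · rw [real_sign_eq_neg_one_iff, div_lt_div_iff₀ hq0 hb0, sub_neg]
      have := key_ineq (-t) (‖q‖) (-(s₂ * aS)) S (‖bS‖) hq0 hb0 hS0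
        (by rw [neg_pow]; simpa using hSsq) (by rw [neg_pow]; simpa using hAB)
      constructor
      · intro h; nlinarith [this.1 (by linarith)]
      · intro h; nlinarith [this.2 (by nlinarith)] }
end
end
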